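/- Under Assumption 1 with 0 < λ < Δ/K²: let m ∈ ℕ and let θ₁, θ₂ be ℝ^d-valued random variables independent of the σ-algebra F^ε_{m+1,∞} = σ(ε_t : t ≥ m+1), with E[V(θ₁)], E[V(θ₂)] < ∞. Then for all n ≥ N + m, P(Z_{m,n}^{θ₁,Y} ≠ Z_{m,n}^{θ₂,Y}) ≤ (E[V(θ₁)] + E[V(θ₂)] + 3)/2 · e^{−κ(n−m)}, where κ > 0 and N ∈ ℕ are the constants from the quenched coupling lemma and V(θ) = exp(a‖θ‖²) with a from the drift lemma. -/

import Mathlib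

open MeasureTheory ProbabilityTheory Filter Real
open scoped RealInnerProductSpace ENNReal

noncomputable section

/-- `ℝ^d` as Euclidean space. -/
abbrev Ed (d : ℕ) : Type := EuclideanSpace ℝ (Fin d)

/-- The standard Gaussian measure on `ℝ^d` (mean `0`, identity covariance). -/
def stdGaussian (d : ℕ) : Measure (Ed d) :=
  (Measure.pi fun _ : Fin d => gaussianReal 0 1).map
    (MeasurableEquiv.toLp 2 (Fin d → ℝ))

/-- The SGLD parametric transition kernel
`Q(y, θ, A) = P(θ − λH(θ,y) + √(2λ)ξ₀ ∈ A)`, as a measure in its last argument. -/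
def kernelQ {d m : ℕ} (H : Ed d → Ed m → Ed d) (lam : ℝ) (y : Ed m) (θ : Ed d) :
    Measure (Ed d) :=
  (stdGaussian d).map (fun z => θ - lam • H θ y + (Real.sqrt (2 * lam)) • z)

/-- The auxiliary iterated-random-function process `Z_{s,t}^{init,y}`:
`Z_{s,t} = init` for `t ≤ s` and `Z_{s,t} = T(y_{t−1}, Z_{s,t−1}, ε_t)` for `t > s`. -/
def Zproc {Ω : Type*} {d m : ℕ} (T : Ed m → Ed d → ℝ → Ed d)
    (eps : ℤ → Ω → ℝ) (y : ℤ → Ω → Ed m) (s : ℕ) (init : Ω → Ed d) :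
    ℕ → Ω → Ed d
  | 0 => init
  | (t + 1) => fun ω => if t + 1 ≤ s then init ω
      else T (y (t : ℤ) ω) (Zproc T eps y s init t ω) (eps ((t : ℤ) + 1) ω)

section Helpers

variable {d m : ℕ}

/-- Deterministic iteration of the random map. -/
def iterT (T : Ed m → Ed d → ℝ → Ed d) (y : ℕ → Ed m) (e : ℕ → ℝ) (x : Ed d) : ℕ → Ed d
  | 0 => x
  | k + 1 => T (y k) (iterT T y e x k) (e k)

lemma iterT_congr (T : Ed m → Ed d → ℝ → Ed d) {y y' : ℕ → Ed m} {e e' : ℕ → ℝ}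
    (x : Ed d) (k : ℕ) (hy : ∀ i < k, y i = y' i) (he : ∀ i < k, e i = e' i) :
    iterT T y e x k = iterT T y' e' x k := by
  induction k with
  | zero => rfl
  | succ k ih =>
      simp only [iterT]
      rw [ih (fun i hi => hy i (by omega)) (fun i hi => he i (by omega)),
        hy k (by omega), he k (by omega)]

lemma iterT_measurable {α : Type*} [MeasurableSpace α] {T : Ed m → Ed d → ℝ → Ed d}
    (hTm : Measurable (fun p : Ed m × Ed d × ℝ => T p.1 p.2.1 p.2.2))
    (y : α → ℕ → Ed m) (e : α → ℕ → ℝ) (x : α → Ed d)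
    (hy : ∀ j, Measurable fun a => y a j) (he : ∀ j, Measurable fun a => e a j)
    (hx : Measurable x) : ∀ k, Measurable fun a => iterT T (y a) (e a) (x a) k
  | 0 => hx
  | (k + 1) => by
      have ih := iterT_measurable hTm y e x hy he hx k
      simp only [iterT]
      exact hTm.comp ((hy k).prodMk (ih.prodMk (he k)))

lemma Zproc_of_le {Ω : Type*} (T : Ed m → Ed d → ℝ → Ed d) (eps : ℤ → Ω → ℝ)
    (Y : ℤ → Ω → Ed m) (s : ℕ) (init : Ω → Ed d) :
    ∀ t : ℕ, t ≤ s → ∀ ω, Zproc T eps Y s init t ω = init ω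
  | 0, _, _ => rfl
  | (t + 1), ht, ω => by simp only [Zproc, if_pos ht]

lemma Zproc_eq_iterT {Ω : Type*} (T : Ed m → Ed d → ℝ → Ed d) (eps : ℤ → Ω → ℝ)
    (Y : ℤ → Ω → Ed m) (s : ℕ) (init : Ω → Ed d) (k : ℕ) (ω : Ω) :
    Zproc T eps Y s init (s + k) ω
      = iterT T (fun j => Y ((s + j : ℕ) : ℤ) ω) (fun j => eps ((s + 1 + j : ℕ) : ℤ) ω)
          (init ω) k := by
  induction k with
  | zero => simpa [iterT] using Zproc_of_le T eps Y s init s le_rfl ω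
  | succ k ih =>
      have h1 : s + (k + 1) = (s + k) + 1 := by omega
      rw [h1]
      simp only [Zproc, iterT]
      rw [if_neg (by omega), ih]
      have he : (((s + k : ℕ) : ℤ) + 1) = ((s + 1 + k : ℕ) : ℤ) := by push_cast; ring
      rw [he]

end Helpers

/-- (Annealed coupling.) Under Assumption 1 with `0 < λ < Δ/K²`,
if `θ₁, θ₂` are random initial values, independent of `σ(ε_t : t ≥ m+1)`, with
`E V(θᵢ) < ∞`, then for all `n ≥ N + m`,
`P(Z_{m,n}^{θ₁,Y} ≠ Z_{m,n}^{θ₂,Y}) ≤ (E V(θ₁) + E V(θ₂) + 3)/2 · e^{−κ(n−m)}`,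
with `κ, N` the constants of the quenched coupling lemma, `V(θ) = exp(a‖θ‖²)`. -/
theorem stmt11 {Ω : Type*} {mΩ : MeasurableSpace Ω} (P : Measure Ω)
    [IsProbabilityMeasure P] {d m : ℕ}
    (H : Ed d → Ed m → Ed d) (hH : Measurable (Function.uncurry H))
    (Δ b K M : ℝ)
    (hΔ : 0 < Δ) (hb : 0 < b)
    (hdis : ∀ (θ : Ed d) (y : Ed m), Δ * ‖θ‖ ^ 2 - b ≤ ⟪H θ y, θ⟫)
    (hK : Δ / Real.sqrt 2 < K)
    (hlin : ∀ (θ : Ed d) (y : Ed m), ‖H θ y‖ ≤ K * (‖θ‖ + ‖y‖ + 1))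
    (hM : 0 < M)
    (lam : ℝ) (hlam : 0 < lam) (hlam2 : lam < Δ / K ^ 2)
    (a : ℝ) (ha : 0 < a)
    -- i.i.d. uniform innovations on [0,1], independent of the stationary data `Y`:
    (eps : ℤ → Ω → ℝ) (hεm : ∀ t, Measurable (eps t))
    (hεi : iIndepFun eps P)
    (hεu : ∀ t, Measure.map (eps t) P = volume.restrict (Set.Icc (0 : ℝ) 1))
    (Y : ℤ → Ω → Ed m) (hYm : ∀ k, Measurable (Y k))
    (hYstat : Measure.map (fun ω (k : ℤ) => Y (k + 1) ω) P
      = Measure.map (fun ω (k : ℤ) => Y k ω) P)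
    (hYb : ∀ᵐ ω ∂P, ‖Y 0 ω‖ ≤ M)
    (hYε : IndepFun (fun ω (t : ℤ) => eps t ω) (fun ω (k : ℤ) => Y k ω) P)
    -- the representation map `T`:
    (T : Ed m → Ed d → ℝ → Ed d)
    (hTm : Measurable (fun p : Ed m × Ed d × ℝ => T p.1 p.2.1 p.2.2))
    (hTrep : ∀ (y : Ed m) (θ : Ed d), ‖y‖ ≤ M →
      Measure.map (T y θ) (volume.restrict (Set.Icc (0 : ℝ) 1)) = kernelQ H lam y θ)
    -- the constants of the quenched coupling lemma:
    (κ : ℝ) (hκ : 0 < κ) (N : ℕ)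
    (hquench : ∀ (x₁ x₂ : Ed d) (y : ℤ → Ed m), (∀ k : ℤ, ‖y k‖ ≤ M) →
      ∀ n : ℕ, N ≤ n →
        (P {ω | Zproc T eps (fun k _ => y k) 0 (fun _ => x₁) n ω
            ≠ Zproc T eps (fun k _ => y k) 0 (fun _ => x₂) n ω}).toReal
          ≤ (Real.exp (a * ‖x₁‖ ^ 2) + Real.exp (a * ‖x₂‖ ^ 2) + 3) / 2
            * Real.exp (-κ * n))
    -- the random initial values, independent of the future innovations:
    (t₀ : ℕ) (θ₁ θ₂ : Ω → Ed d) (hθ₁m : Measurable θ₁) (hθ₂m : Measurable θ₂)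
    (hindep : Indep
      (MeasurableSpace.comap (fun ω => (θ₁ ω, θ₂ ω, fun k : ℤ => Y k ω)) inferInstance)
      (⨆ (t : ℤ) (_ : (t₀ : ℤ) + 1 ≤ t), MeasurableSpace.comap (eps t) inferInstance) P)
    (hint₁ : Integrable (fun ω => Real.exp (a * ‖θ₁ ω‖ ^ 2)) P)
    (hint₂ : Integrable (fun ω => Real.exp (a * ‖θ₂ ω‖ ^ 2)) P) :
    ∀ n : ℕ, N + t₀ ≤ n →
      (P {ω | Zproc T eps Y t₀ θ₁ n ω ≠ Zproc T eps Y t₀ θ₂ n ω}).toReal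
        ≤ ((∫ ω, Real.exp (a * ‖θ₁ ω‖ ^ 2) ∂P)
            + (∫ ω, Real.exp (a * ‖θ₂ ω‖ ^ 2) ∂P) + 3) / 2
          * Real.exp (-κ * ((n : ℝ) - (t₀ : ℝ))) := by
  intro n hn
  obtain ⟨k, rfl⟩ : ∃ k, n = t₀ + k := ⟨n - t₀, by omega⟩
  have hNk : N ≤ k := by omega
  -- the uniform measure on [0,1]
  set unif : Measure ℝ := volume.restrict (Set.Icc (0 : ℝ) 1) with hunif
  haveI hunifP : IsProbabilityMeasure unif := ⟨by simp [hunif, Real.volume_Icc]⟩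
  -- path maps
  have hpath : Measurable (fun ω (t : ℤ) => Y t ω) :=
    measurable_pi_lambda _ fun t => hYm t
  -- Step A: all marginals of Y have the same law
  have hYlaw : ∀ t : ℤ, P.map (Y t) = P.map (Y 0) := by
    have h1 : ∀ t : ℤ, P.map (Y (t + 1)) = P.map (Y t) := by
      intro t
      have hpath1 : Measurable (fun ω (t : ℤ) => Y (t + 1) ω) :=
        measurable_pi_lambda _ fun t => hYm _
      have := congrArg (Measure.map (fun f : ℤ → Ed m => f t)) hYstat
      rwa [Measure.map_map (measurable_pi_apply t) hpath1,
        Measure.map_map (measurable_pi_apply t) hpath] at this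
    intro t
    induction t using Int.induction_on with
    | zero => rfl
    | succ i ih => rw [h1 i, ih]
    | pred i ih => rw [← ih, ← h1 (-i - 1)]; norm_num
  -- Step B: the whole trajectory is a.s. bounded by M
  have hYbdd : ∀ᵐ ω ∂P, ∀ t : ℤ, ‖Y t ω‖ ≤ M := by
    rw [ae_all_iff]
    intro t
    have hA : MeasurableSet {v : Ed m | ¬ ‖v‖ ≤ M} := by
      have : IsOpen {v : Ed m | M < ‖v‖} := isOpen_lt continuous_const continuous_norm
      simpa [not_le] using this.measurableSet
    have h0 : P {ω | ¬ ‖Y 0 ω‖ ≤ M} = 0 := by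
      simpa [ae_iff] using hYb
    have : P {ω | ¬ ‖Y t ω‖ ≤ M} = 0 := by
      have e1 : P {ω | ¬ ‖Y t ω‖ ≤ M} = (P.map (Y t)) {v | ¬ ‖v‖ ≤ M} := by
        rw [Measure.map_apply (hYm t) hA]; rfl
      have e2 : P {ω | ¬ ‖Y 0 ω‖ ≤ M} = (P.map (Y 0)) {v | ¬ ‖v‖ ≤ M} := by
        rw [Measure.map_apply (hYm 0) hA]; rfl
      rw [e1, hYlaw t, ← e2, h0]
    simpa [ae_iff] using this
  -- the joint map X and the innovation blocks
  set X : Ω → Ed d × Ed d × (ℤ → Ed m) := fun ω => (θ₁ ω, θ₂ ω, fun t : ℤ => Y t ω) with hX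
  have hXm : Measurable X := hθ₁m.prodMk (hθ₂m.prodMk hpath)
  -- iid block laws
  have hshift : ∀ c : ℕ,
      P.map (fun ω (j : Fin k) => eps ((c + 1 + (j : ℕ) : ℕ) : ℤ) ω)
        = Measure.pi (fun _ : Fin k => unif) := by
    intro c
    set g : Fin k → ℤ := fun j => ((c + 1 + (j : ℕ) : ℕ) : ℤ) with hg
    have hgi : Function.Injective g := by
      intro j j' h
      simp only [hg, Nat.cast_inj] at h
      exact Fin.ext (by omega)
    have hEm : Measurable (fun ω (j : Fin k) => eps (g j) ω) :=
      measurable_pi_lambda _ fun j => hεm _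
    refine (Measure.pi_eq fun s hs => ?_).symm
    set sets : ℤ → Set ℝ := fun t => ⋂ (j : Fin k) (_ : g j = t), s j with hsets
    have sets_g : ∀ j : Fin k, sets (g j) = s j := by
      intro j
      apply subset_antisymm
      · intro x hx
        simp only [hsets, Set.mem_iInter] at hx
        exact hx j rfl
      · intro x hx
        simp only [hsets, Set.mem_iInter]
        intro j' hj'
        cases hgi hj'
        exact hx
    have hsets_m : ∀ t, MeasurableSet (sets t) :=
      fun t => MeasurableSet.iInter fun j => MeasurableSet.iInter fun _ => hs j
    have hinter := hεi.measure_inter_preimage_eq_mul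
      (Finset.image g Finset.univ) (sets := sets) (fun i _ => hsets_m i)
    have e1 : (⋂ i ∈ Finset.image g Finset.univ, eps i ⁻¹' sets i)
        = ⋂ j : Fin k, eps (g j) ⁻¹' s j := by
      ext ω
      simp only [Set.mem_iInter, Finset.mem_image, Finset.mem_univ, true_and,
        Set.mem_preimage]
      constructor
      · intro h j
        have := h (g j) ⟨j, rfl⟩
        rwa [sets_g] at this
      · rintro h i ⟨j, rfl⟩
        rw [sets_g]; exact h j
    have e2 : ∏ i ∈ Finset.image g Finset.univ, P (eps i ⁻¹' sets i)
        = ∏ j : Fin k, unif (s j) := by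
      rw [Finset.prod_image (fun j _ j' _ h => hgi h)]
      refine Finset.prod_congr rfl fun j _ => ?_
      rw [sets_g, ← hεu (g j), Measure.map_apply (hεm _) (hs j)]
    rw [Measure.map_apply hEm (MeasurableSet.univ_pi hs)]
    have e3 : (fun ω (j : Fin k) => eps (g j) ω) ⁻¹' Set.pi Set.univ s
        = ⋂ j : Fin k, eps (g j) ⁻¹' s j := by
      ext ω; simp [Set.mem_pi]
    rw [e3, ← e1, hinter, e2]
  set E' : Ω → Fin k → ℝ := fun ω (j : Fin k) => eps ((t₀ + 1 + (j : ℕ) : ℕ) : ℤ) ω with hE'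
  set E₁ : Ω → Fin k → ℝ := fun ω (j : Fin k) => eps ((0 + 1 + (j : ℕ) : ℕ) : ℤ) ω with hE₁
  have hE'm : Measurable E' := measurable_pi_lambda _ fun j => hεm _
  have hE₁m : Measurable E₁ := measurable_pi_lambda _ fun j => hεm _
  have hE'law : P.map E' = Measure.pi (fun _ : Fin k => unif) := hshift t₀
  have hE₁law : P.map E₁ = Measure.pi (fun _ : Fin k => unif) := hshift 0
  -- independence of X and E'
  have hIF : IndepFun X E' P := by
    have hle : MeasurableSpace.comap E' inferInstance
        ≤ ⨆ (t : ℤ) (_ : (t₀ : ℤ) + 1 ≤ t), MeasurableSpace.comap (eps t) inferInstance := by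
      rw [show (inferInstance : MeasurableSpace (Fin k → ℝ)) = MeasurableSpace.pi from rfl,
        MeasurableSpace.pi, MeasurableSpace.comap_iSup]
      refine iSup_le fun j => ?_
      rw [MeasurableSpace.comap_comp]
      exact le_iSup₂ (f := fun (t : ℤ) (_ : (t₀ : ℤ) + 1 ≤ t) =>
          MeasurableSpace.comap (eps t) inferInstance)
          ((t₀ + 1 + (j : ℕ) : ℕ) : ℤ) (by push_cast; omega)
    exact indep_of_indep_of_le_right hindep hle
  have hprod : P.map (fun ω => (X ω, E' ω)) = (P.map X).prod (P.map E') :=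
    (indepFun_iff_map_prod_eq_prod_map_map hXm.aemeasurable hE'm.aemeasurable).mp hIF
  -- the bad set S
  set ext : (Fin k → ℝ) → ℕ → ℝ := fun f j => if h : j < k then f ⟨j, h⟩ else 0 with hext
  set S : Set ((Ed d × Ed d × (ℤ → Ed m)) × (Fin k → ℝ)) :=
    {p | iterT T (fun j => p.1.2.2 ((t₀ + j : ℕ) : ℤ)) (ext p.2) p.1.1 k
       ≠ iterT T (fun j => p.1.2.2 ((t₀ + j : ℕ) : ℤ)) (ext p.2) p.1.2.1 k} with hSdef
  have hym : ∀ j : ℕ, Measurable fun p : (Ed d × Ed d × (ℤ → Ed m)) × (Fin k → ℝ) =>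
      p.1.2.2 ((t₀ + j : ℕ) : ℤ) :=
    fun j => (measurable_pi_apply _).comp (measurable_fst.snd.snd)
  have hem : ∀ j : ℕ, Measurable fun p : (Ed d × Ed d × (ℤ → Ed m)) × (Fin k → ℝ) =>
      ext p.2 j := by
    intro j
    simp only [hext]
    split_ifs with h
    · exact (measurable_pi_apply _).comp measurable_snd
    · exact measurable_const
  have hiter1 : Measurable fun p : (Ed d × Ed d × (ℤ → Ed m)) × (Fin k → ℝ) =>
      iterT T (fun j => p.1.2.2 ((t₀ + j : ℕ) : ℤ)) (ext p.2) p.1.1 k :=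
    iterT_measurable hTm _ _ _ hym hem measurable_fst.fst k
  have hiter2 : Measurable fun p : (Ed d × Ed d × (ℤ → Ed m)) × (Fin k → ℝ) =>
      iterT T (fun j => p.1.2.2 ((t₀ + j : ℕ) : ℤ)) (ext p.2) p.1.2.1 k :=
    iterT_measurable hTm _ _ _ hym hem measurable_fst.snd.fst k
  have hS : MeasurableSet S :=
    (measurableSet_eq_fun hiter1 hiter2).compl
  -- rewrite the event
  have hset : {ω | Zproc T eps Y t₀ θ₁ (t₀ + k) ω ≠ Zproc T eps Y t₀ θ₂ (t₀ + k) ω}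
      = (fun ω => (X ω, E' ω)) ⁻¹' S := by
    ext ω
    simp only [Set.mem_setOf_eq, Set.mem_preimage, hSdef]
    rw [Zproc_eq_iterT, Zproc_eq_iterT]
    have he : ∀ x : Ed d,
        iterT T (fun j => Y ((t₀ + j : ℕ) : ℤ) ω)
          (fun j => eps ((t₀ + 1 + j : ℕ) : ℤ) ω) x k
        = iterT T (fun j => Y ((t₀ + j : ℕ) : ℤ) ω) (ext (E' ω)) x k := by
      intro x
      refine iterT_congr T x k (fun i hi => rfl) fun i hi => ?_
      simp [hext, hE', hi]
    rw [he, he]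
  -- the quenched bound, integrated
  set ν : Measure (Ed d × Ed d × (ℤ → Ed m)) := P.map X with hν
  have key : P ((fun ω => (X ω, E' ω)) ⁻¹' S)
      = ∫⁻ γ, (Measure.pi fun _ : Fin k => unif) (Prod.mk γ ⁻¹' S) ∂ν := by
    rw [← Measure.map_apply (hXm.prodMk hE'm) hS, hprod, hE'law, Measure.prod_apply hS]
  have haeν : ∀ᵐ γ ∂ν, ∀ t : ℤ, ‖γ.2.2 t‖ ≤ M := by
    have hms : MeasurableSet {γ : Ed d × Ed d × (ℤ → Ed m) | ∀ t : ℤ, ‖γ.2.2 t‖ ≤ M} := by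
      rw [Set.setOf_forall]
      refine MeasurableSet.iInter fun t => ?_
      have : IsClosed {v : Ed m | ‖v‖ ≤ M} := isClosed_le continuous_norm continuous_const
      exact this.measurableSet.preimage ((measurable_pi_apply t).comp measurable_snd.snd)
    rw [hν, ae_map_iff hXm.aemeasurable hms]
    filter_upwards [hYbdd] with ω hω
    exact fun t => hω t
  have hbound : ∀ᵐ γ ∂ν, (Measure.pi fun _ : Fin k => unif) (Prod.mk γ ⁻¹' S)
      ≤ ENNReal.ofReal ((Real.exp (a * ‖γ.1‖ ^ 2) + Real.exp (a * ‖γ.2.1‖ ^ 2) + 3) / 2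
          * Real.exp (-κ * k)) := by
    filter_upwards [haeν] with γ hγ
    have hsec : (Measure.pi fun _ : Fin k => unif) (Prod.mk γ ⁻¹' S)
        = P {ω | Zproc T eps (fun t (_ : Ω) => γ.2.2 ((t₀ : ℤ) + t)) 0 (fun _ => γ.1) k ω
            ≠ Zproc T eps (fun t (_ : Ω) => γ.2.2 ((t₀ : ℤ) + t)) 0 (fun _ => γ.2.1) k ω} := by
      rw [← hE₁law, Measure.map_apply hE₁m (hS.preimage measurable_prodMk_left)]
      congr 1
      ext ω
      simp only [Set.mem_preimage, Set.mem_setOf_eq, hSdef]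
      have hz := Zproc_eq_iterT T eps (fun t (_ : Ω) => γ.2.2 ((t₀ : ℤ) + t)) 0
      have hz1 := hz (fun _ => γ.1) k ω
      have hz2 := hz (fun _ => γ.2.1) k ω
      rw [zero_add] at hz1 hz2
      rw [hz1, hz2]
      have he : ∀ x : Ed d,
          iterT T (fun j => γ.2.2 ((t₀ : ℤ) + ((0 + j : ℕ) : ℤ)))
            (fun j => eps ((0 + 1 + j : ℕ) : ℤ) ω) x k
          = iterT T (fun j => γ.2.2 ((t₀ + j : ℕ) : ℤ)) (ext (E₁ ω)) x k := by
        intro x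
        refine iterT_congr T x k (fun i hi => ?_) fun i hi => ?_
        · congr 1; push_cast; ring
        · simp [hext, hE₁, hi]
      rw [he, he]
    rw [hsec]
    have hq := hquench γ.1 γ.2.1 (fun t => γ.2.2 ((t₀ : ℤ) + t)) (fun t => hγ _) k hNk
    have hc : (0 : ℝ) ≤ (Real.exp (a * ‖γ.1‖ ^ 2) + Real.exp (a * ‖γ.2.1‖ ^ 2) + 3) / 2
        * Real.exp (-κ * k) := by positivity
    exact (ENNReal.le_ofReal_iff_toReal_le (measure_ne_top P _) hc).mpr hq
  -- integrate the bound
  have hgm : Measurable (fun γ : Ed d × Ed d × (ℤ → Ed m) =>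
      (Real.exp (a * ‖γ.1‖ ^ 2) + Real.exp (a * ‖γ.2.1‖ ^ 2) + 3) / 2
        * Real.exp (-κ * k)) := by
    have h1 : Measurable fun γ : Ed d × Ed d × (ℤ → Ed m) => Real.exp (a * ‖γ.1‖ ^ 2) :=
      Real.measurable_exp.comp ((measurable_fst.norm.pow_const 2).const_mul a)
    have h2 : Measurable fun γ : Ed d × Ed d × (ℤ → Ed m) => Real.exp (a * ‖γ.2.1‖ ^ 2) :=
      Real.measurable_exp.comp ((measurable_snd.fst.norm.pow_const 2).const_mul a)
    exact (((h1.add h2).add measurable_const).div_const 2).mul_const _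
  have hgint : Integrable (fun γ : Ed d × Ed d × (ℤ → Ed m) =>
      (Real.exp (a * ‖γ.1‖ ^ 2) + Real.exp (a * ‖γ.2.1‖ ^ 2) + 3) / 2
        * Real.exp (-κ * k)) ν := by
    rw [hν, integrable_map_measure hgm.aestronglyMeasurable hXm.aemeasurable]
    exact (((hint₁.add hint₂).add (integrable_const 3)).div_const 2).mul_const _
  have hIg : ∫ γ, (Real.exp (a * ‖γ.1‖ ^ 2) + Real.exp (a * ‖γ.2.1‖ ^ 2) + 3) / 2
        * Real.exp (-κ * k) ∂ν
      = ((∫ ω, Real.exp (a * ‖θ₁ ω‖ ^ 2) ∂P) + (∫ ω, Real.exp (a * ‖θ₂ ω‖ ^ 2) ∂P) + 3) / 2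
        * Real.exp (-κ * k) := by
    rw [hν, integral_map hXm.aemeasurable hgm.aestronglyMeasurable]
    have hsum : Integrable (fun ω => Real.exp (a * ‖θ₁ ω‖ ^ 2)
        + Real.exp (a * ‖θ₂ ω‖ ^ 2)) P := hint₁.add hint₂
    rw [integral_mul_const, integral_div, integral_add hsum (integrable_const 3),
      integral_add hint₁ hint₂, integral_const]
    simp [measure_univ]
  have hle : P {ω | Zproc T eps Y t₀ θ₁ (t₀ + k) ω ≠ Zproc T eps Y t₀ θ₂ (t₀ + k) ω}
      ≤ ENNReal.ofReal (((∫ ω, Real.exp (a * ‖θ₁ ω‖ ^ 2) ∂P)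
          + (∫ ω, Real.exp (a * ‖θ₂ ω‖ ^ 2) ∂P) + 3) / 2 * Real.exp (-κ * k)) := by
    rw [hset, key]
    refine le_trans (lintegral_mono_ae hbound) ?_
    rw [← ofReal_integral_eq_lintegral_ofReal hgint (ae_of_all _ fun γ => by positivity), hIg]
  have hRHS0 : (0 : ℝ) ≤ ((∫ ω, Real.exp (a * ‖θ₁ ω‖ ^ 2) ∂P)
      + (∫ ω, Real.exp (a * ‖θ₂ ω‖ ^ 2) ∂P) + 3) / 2 * Real.exp (-κ * k) := by
    have h1 : 0 ≤ ∫ ω, Real.exp (a * ‖θ₁ ω‖ ^ 2) ∂P :=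
      integral_nonneg fun ω => (Real.exp_pos _).le
    have h2 : 0 ≤ ∫ ω, Real.exp (a * ‖θ₂ ω‖ ^ 2) ∂P :=
      integral_nonneg fun ω => (Real.exp_pos _).le
    positivity
  have hcast : ((t₀ + k : ℕ) : ℝ) - (t₀ : ℝ) = (k : ℝ) := by push_cast; ring
  rw [hcast]
  calc (P {ω | Zproc T eps Y t₀ θ₁ (t₀ + k) ω ≠ Zproc T eps Y t₀ θ₂ (t₀ + k) ω}).toReal
      ≤ (ENNReal.ofReal (((∫ ω, Real.exp (a * ‖θ₁ ω‖ ^ 2) ∂P)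
          + (∫ ω, Real.exp (a * ‖θ₂ ω‖ ^ 2) ∂P) + 3) / 2 * Real.exp (-κ * k))).toReal :=
        ENNReal.toReal_mono ENNReal.ofReal_ne_top hle
    _ = _ := ENNReal.toReal_ofReal hRHS0
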